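/- Let X ∈ L_n be a fixed point of T, i.e., X maximizes Y ↦ X·Y over L_n. Then X² = DX where D is the diagonal matrix with D_{ii} = ∑_j X_{ij}², and each D_{ii} ≥ 1. -/

import Mathlib

open Matrix

lemma sum_sq_eq_zero' {n : ℕ} {s : Fin n → ℝ} (h : ∑ k, s k * s k = 0) : ∀ k, s k = 0 := by
  intro k
  have := (Finset.sum_eq_zero_iff_of_nonneg (fun j _ => mul_self_nonneg (s j))).mp h k
    (Finset.mem_univ k)
  exact mul_self_eq_zero.mp this

lemma maximize_aux {n : ℕ} (s v : Fin n → ℝ) (hv : ∑ k, v k * v k = 1)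
    (h : ∀ u : Fin n → ℝ, (∑ k, u k * u k) = 1 → ∑ k, s k * u k ≤ ∑ k, s k * v k) :
    ∀ k, s k = (∑ j, s j * v j) * v k := by
  set c := ∑ j, s j * v j with hc
  have hc0 : 0 ≤ c := by
    have h1 := h (fun k => -v k) (by simpa using hv)
    simp only [mul_neg, Finset.sum_neg_distrib] at h1
    simp only [← hc] at h1
    linarith
  set r2 := ∑ k, s k * s k with hr2
  have hr2nn : 0 ≤ r2 := Finset.sum_nonneg fun k _ => mul_self_nonneg _
  have hkey : ∑ k, (s k - c * v k) * (s k - c * v k) = r2 - c * c := by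
    have hterm : ∀ k, (s k - c * v k) * (s k - c * v k)
        = s k * s k - 2 * c * (s k * v k) + c * c * (v k * v k) := fun k => by ring
    rw [Finset.sum_congr rfl fun k _ => hterm k]
    rw [Finset.sum_add_distrib, Finset.sum_sub_distrib, ← Finset.mul_sum, ← Finset.mul_sum,
      hv, ← hc, ← hr2]
    ring
  have hsqnn : 0 ≤ ∑ k, (s k - c * v k) * (s k - c * v k) :=
    Finset.sum_nonneg fun k _ => mul_self_nonneg _
  have hcsq : c * c ≤ r2 := by linarith
  by_cases h0 : r2 = 0
  · intro k
    have hs := sum_sq_eq_zero' (hr2 ▸ h0)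
    have hcz : c = 0 := by
      rw [hc]; apply Finset.sum_eq_zero; intro j _; rw [hs j]; ring
    rw [hs k, hcz]; ring
  · have hr2pos : 0 < r2 := lt_of_le_of_ne hr2nn (Ne.symm h0)
    set r := Real.sqrt r2 with hr
    have hrpos : 0 < r := Real.sqrt_pos.mpr hr2pos
    have hrr : r * r = r2 := Real.mul_self_sqrt hr2nn
    have hu : ∑ k, (r⁻¹ * s k) * (r⁻¹ * s k) = 1 := by
      have hterm : ∀ k, (r⁻¹ * s k) * (r⁻¹ * s k) = r⁻¹ * r⁻¹ * (s k * s k) := fun k => by ring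
      rw [Finset.sum_congr rfl fun k _ => hterm k, ← Finset.mul_sum, ← hr2]
      field_simp
      linarith
    have hle : r ≤ c := by
      have h2 := h (fun k => r⁻¹ * s k) hu
      have h3 : ∑ k, s k * (r⁻¹ * s k) = r := by
        have hterm : ∀ k, s k * (r⁻¹ * s k) = r⁻¹ * (s k * s k) := fun k => by ring
        rw [Finset.sum_congr rfl fun k _ => hterm k, ← Finset.mul_sum, ← hr2]
        field_simp
        linarith
      rw [h3] at h2; exact h2
    have hcr : c = r := le_antisymm (by nlinarith) hle
    have hzero : ∑ k, (s k - c * v k) * (s k - c * v k) = 0 := by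
      rw [hkey, hcr]; linarith
    intro k
    have := sum_sq_eq_zero' hzero k
    linarith

def elliptope (n : ℕ) : Set (Matrix (Fin n) (Fin n) ℝ) :=
  {X | X.PosSemidef ∧ ∀ i, X i i = 1}

def frob {n : ℕ} (A B : Matrix (Fin n) (Fin n) ℝ) : ℝ :=
  ∑ i, ∑ j, A i j * B i j

theorem stmt10 {n : ℕ} (X : Matrix (Fin n) (Fin n) ℝ) (hX : X ∈ elliptope n)
    (hfix : ∀ Y ∈ elliptope n, frob X Y ≤ frob X X) :
    X * X = Matrix.diagonal (fun i => ∑ j, (X i j) ^ 2) * X ∧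
      ∀ i : Fin n, (1 : ℝ) ≤ ∑ j, (X i j) ^ 2 := by
  obtain ⟨hpsd, hdiag⟩ := hX
  obtain ⟨B, hB⟩ : ∃ B : Matrix (Fin n) (Fin n) ℝ, X = Bᴴ * B := by
    open scoped MatrixOrder in
    exact CStarAlgebra.nonneg_iff_eq_star_mul_self.mp hpsd.nonneg
  have hXE : ∀ p q, X p q = ∑ k, B k p * B k q := by
    intro p q
    rw [hB]
    simp [Matrix.mul_apply, Matrix.conjTranspose_apply]
  have hsym : ∀ p q, X p q = X q p := by
    intro p q; rw [hXE, hXE]; exact Finset.sum_congr rfl fun k _ => mul_comm _ _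
  have hpart2 : ∀ i : Fin n, (1:ℝ) ≤ ∑ j, (X i j)^2 := by
    intro i
    have h1 : (X i i)^2 ≤ ∑ j, (X i j)^2 :=
      Finset.single_le_sum (f := fun j => (X i j)^2) (fun j _ => sq_nonneg _) (Finset.mem_univ i)
    rw [hdiag i] at h1; simpa using h1
  refine ⟨?_, hpart2⟩
  have main : ∀ i k, (∑ j, X i j * B k j) - B k i = ((∑ j, X i j ^ 2) - 1) * B k i := by
    intro i
    set s : Fin n → ℝ := fun k => (∑ j, X i j * B k j) - B k i with hs
    have hvunit : ∑ k, B k i * B k i = 1 := by rw [← hXE i i]; exact hdiag i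
    have stepA : ∀ u : Fin n → ℝ, (∑ k, u k * u k) = 1 →
        ∑ k, s k * u k ≤ ∑ k, s k * B k i := by
      intro u hu
      set W : Matrix (Fin n) (Fin n) ℝ := fun k j => if j = i then u k else B k j with hWdef
      set e : Fin n → ℝ := fun p => if p = i then 1 else 0 with he_def
      set d : Fin n → ℝ := fun k => u k - B k i with hd_def
      have hWeq : ∀ k p, W k p = B k p + e p * d k := by
        intro k p
        by_cases hp : p = i
        · subst hp; simp [hWdef, he_def, hd_def]
        · simp [hWdef, he_def, hd_def, hp]
      have he : ∀ f : Fin n → ℝ, ∑ p, e p * f p = f i := by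
        intro f
        simp [he_def, ite_mul]
      have hYmem : Wᵀ * W ∈ elliptope n := by
        refine ⟨?_, ?_⟩
        · have h := Matrix.posSemidef_conjTranspose_mul_self W
          rwa [Matrix.conjTranspose_eq_transpose_of_trivial] at h
        · intro j
          simp only [Matrix.mul_apply, Matrix.transpose_apply]
          by_cases hj : j = i
          · subst hj
            have : ∀ k, W k j = u k := fun k => by simp [hWdef]
            simp only [this]
            exact hu
          · have : ∀ k, W k j = B k j := fun k => by simp [hWdef, hj]
            simp only [this]
            rw [← hXE j j]; exact hdiag j
      have hle := hfix _ hYmem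
      have hst : ∀ k, (∑ q, X i q * B k q) = s k + B k i := by
        intro k; simp only [hs]; ring
      have expand : frob X (Wᵀ * W)
          = ∑ p, ∑ q, ∑ k, (X p q * (B k p * B k q)
              + (e p * (X p q * (d k * B k q))
              + (e q * (X p q * (d k * B k p))
              + e p * (e q * (X p q * (d k * d k)))))) := by
        simp only [frob, Matrix.mul_apply, Matrix.transpose_apply, Finset.mul_sum]
        refine Finset.sum_congr rfl fun p _ => Finset.sum_congr rfl fun q _ =>
          Finset.sum_congr rfl fun k _ => ?_
        rw [hWeq k p, hWeq k q]; ring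
      have hT1 : ∑ p, ∑ q, ∑ k, X p q * (B k p * B k q) = frob X X := by
        simp only [frob]
        refine Finset.sum_congr rfl fun p _ => Finset.sum_congr rfl fun q _ => ?_
        rw [← Finset.mul_sum, ← hXE]
      have hT2 : ∑ p, ∑ q, ∑ k, e p * (X p q * (d k * B k q))
          = ∑ q, ∑ k, X i q * (d k * B k q) := by
        have h1 : ∀ p, (∑ q, ∑ k, e p * (X p q * (d k * B k q)))
            = e p * ∑ q, ∑ k, X p q * (d k * B k q) := by
          intro p; rw [Finset.mul_sum]
          exact Finset.sum_congr rfl fun q _ => (Finset.mul_sum _ _ _).symm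
        rw [Finset.sum_congr rfl fun p _ => h1 p, he (fun p => ∑ q, ∑ k, X p q * (d k * B k q))]
      have hT3 : ∑ p, ∑ q, ∑ k, e q * (X p q * (d k * B k p))
          = ∑ q, ∑ k, X i q * (d k * B k q) := by
        rw [Finset.sum_comm]
        have h1 : ∀ q, (∑ p, ∑ k, e q * (X p q * (d k * B k p)))
            = e q * ∑ p, ∑ k, X p q * (d k * B k p) := by
          intro q; rw [Finset.mul_sum]
          exact Finset.sum_congr rfl fun p _ => (Finset.mul_sum _ _ _).symm
        rw [Finset.sum_congr rfl fun q _ => h1 q, he (fun q => ∑ p, ∑ k, X p q * (d k * B k p))]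
        refine Finset.sum_congr rfl fun p _ => Finset.sum_congr rfl fun k _ => ?_
        rw [hsym p i]
      have hT4 : ∑ p, ∑ q, ∑ k, e p * (e q * (X p q * (d k * d k))) = ∑ k, d k * d k := by
        have h1 : ∀ p, (∑ q, ∑ k, e p * (e q * (X p q * (d k * d k))))
            = e p * ∑ q, ∑ k, e q * (X p q * (d k * d k)) := by
          intro p; rw [Finset.mul_sum]
          exact Finset.sum_congr rfl fun q _ => (Finset.mul_sum _ _ _).symm
        rw [Finset.sum_congr rfl fun p _ => h1 p,
          he (fun p => ∑ q, ∑ k, e q * (X p q * (d k * d k)))]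
        have h2 : ∀ q, (∑ k, e q * (X i q * (d k * d k)))
            = e q * ∑ k, X i q * (d k * d k) := fun q => (Finset.mul_sum _ _ _).symm
        rw [Finset.sum_congr rfl fun q _ => h2 q, he (fun q => ∑ k, X i q * (d k * d k))]
        rw [← Finset.mul_sum, hdiag i, one_mul]
      have hS : ∑ q, ∑ k, X i q * (d k * B k q)
          = ((∑ k, s k * u k) - (∑ k, s k * B k i)) + ((∑ k, u k * B k i) - 1) := by
        rw [Finset.sum_comm]
        have h1 : ∀ k, (∑ q, X i q * (d k * B k q)) = d k * (s k + B k i) := by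
          intro k
          rw [← hst k, Finset.mul_sum]
          exact Finset.sum_congr rfl fun q _ => by ring
        rw [Finset.sum_congr rfl fun k _ => h1 k]
        have h2 : ∀ k, d k * (s k + B k i)
            = (s k * u k - s k * B k i) + (u k * B k i - B k i * B k i) := by
          intro k; simp only [hd_def]; ring
        rw [Finset.sum_congr rfl fun k _ => h2 k, Finset.sum_add_distrib,
          Finset.sum_sub_distrib, Finset.sum_sub_distrib, hvunit]
      have hT : ∑ k, d k * d k = 2 - 2 * ∑ k, u k * B k i := by
        have h2 : ∀ k, d k * d k = (u k * u k - 2 * (u k * B k i)) + B k i * B k i := by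
          intro k; simp only [hd_def]; ring
        rw [Finset.sum_congr rfl fun k _ => h2 k, Finset.sum_add_distrib,
          Finset.sum_sub_distrib, hu, hvunit, ← Finset.mul_sum]
        ring
      have key : frob X (Wᵀ * W)
          = frob X X + 2 * ((∑ k, s k * u k) - ∑ k, s k * B k i) := by
        rw [expand]
        simp only [Finset.sum_add_distrib]
        rw [hT1, hT2, hT3, hT4, hS, hT]
        ring
      rw [key] at hle
      linarith
    have hfin := maximize_aux s (fun k => B k i) hvunit stepA
    have hc : (∑ j, s j * B j i) = (∑ j, X i j ^ 2) - 1 := by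
      have h1 : ∑ j, s j * B j i
          = (∑ j, ∑ m, X i m * (B j m * B j i)) - ∑ j, B j i * B j i := by
        rw [← Finset.sum_sub_distrib]
        refine Finset.sum_congr rfl fun j _ => ?_
        simp only [hs]
        rw [sub_mul, Finset.sum_mul]
        congr 1
        exact Finset.sum_congr rfl fun m _ => by ring
      rw [h1, hvunit, Finset.sum_comm]
      congr 1
      refine Finset.sum_congr rfl fun m _ => ?_
      rw [← Finset.mul_sum, ← hXE m i, ← hsym i m, sq]
    intro k
    have := hfin k
    rw [hc] at this
    simpa only [hs] using this
  ext i m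
  rw [Matrix.mul_apply, Matrix.diagonal_mul]
  calc ∑ j, X i j * X j m = ∑ j, ∑ k, X i j * (B k j * B k m) := by
        refine Finset.sum_congr rfl fun j _ => ?_
        rw [hXE j m, Finset.mul_sum]
    _ = ∑ k, (∑ j, X i j * B k j) * B k m := by
        rw [Finset.sum_comm]
        refine Finset.sum_congr rfl fun k _ => ?_
        rw [Finset.sum_mul]
        exact Finset.sum_congr rfl fun j _ => by ring
    _ = ∑ k, ((∑ j, X i j ^ 2) * B k i) * B k m := by
        refine Finset.sum_congr rfl fun k _ => ?_
        have h2 : (∑ j, X i j * B k j) = (∑ j, X i j ^ 2) * B k i := by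
          linear_combination main i k
        rw [h2]
    _ = (∑ j, X i j ^ 2) * X i m := by
        rw [hXE i m, Finset.mul_sum]
        exact Finset.sum_congr rfl fun k _ => by ring
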